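/- If a tripartite no-signaling distribution p(a,b,e|x,y,z) over binary inputs and outputs satisfies β(A,B) = 1 (i.e., the A-B marginal is the PR-box), then the distribution factorizes as p(a,b,e|x,y,z) = p(a,b|x,y)·p(e|z); in particular β(B,E) = 1/2. -/
import Mathlib


/-- CHSH functional of a bipartite correlation q(o₁,o₂|i₁,i₂). -/
noncomputable def chsh (q : Bool → Bool → Bool → Bool → ℝ) : ℝ :=
  (1/4) * ∑ i₁ : Bool, ∑ i₂ : Bool, ∑ o₁ : Bool, ∑ o₂ : Bool,
    (if xor o₁ o₂ = (i₁ && i₂) then q o₁ o₂ i₁ i₂ else 0)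

/-- if a tripartite no-signaling distribution has β(A,B) = 1
    (equivalently, its A-B marginal is the PR-box), then it factorizes as
    p(a,b,e|x,y,z) = p(a,b|x,y)·p(e|z), and in particular β(B,E) = 1/2. -/
theorem prbox_marginal_factorizes
    (p : Bool → Bool → Bool → Bool → Bool → Bool → ℝ)
    (hpos : ∀ a b e x y z, 0 ≤ p a b e x y z)
    (hnorm : ∀ x y z, ∑ a : Bool, ∑ b : Bool, ∑ e : Bool, p a b e x y z = 1)
    (hnsE : ∀ a b x y z z', ∑ e : Bool, p a b e x y z = ∑ e : Bool, p a b e x y z')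
    (hnsA : ∀ b e x x' y z, ∑ a : Bool, p a b e x y z = ∑ a : Bool, p a b e x' y z)
    (hnsB : ∀ a e x y y' z, ∑ b : Bool, p a b e x y z = ∑ b : Bool, p a b e x y' z)
    (hchshAB : chsh (fun a b x y => ∑ e : Bool, p a b e x y false) = 1) :
    (∀ a b e x y z, p a b e x y z
      = (∑ e' : Bool, p a b e' x y z) * (∑ a' : Bool, ∑ b' : Bool, p a' b' e x y z)) ∧
    chsh (fun b e y z => ∑ a : Bool, p a b e false y z) = 1/2 := by
  have hch := hchshAB
  simp only [chsh, Fintype.sum_bool] at hch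
  norm_num at hch
  have hz0 : ∀ a b e x y, xor a b ≠ (x && y) → p a b e x y false = 0 := by
    have h00 := hnorm false false false
    have h01 := hnorm false true false
    have h10 := hnorm true false false
    have h11 := hnorm true true false
    simp only [Fintype.sum_bool] at h00 h01 h10 h11
    intro a b e x y h
    cases a <;> cases b <;> cases e <;> cases x <;> cases y <;>
      first
      | exact absurd (by decide) h
      | linarith [hpos false false false false false false, hpos false false false false true false, hpos false false false true false false, hpos false false false true true false, hpos false false true false false false, hpos false false true false true false, hpos false false true true false false, hpos false false true true true false, hpos false true false false false false, hpos false true false false true false, hpos false true false true false false, hpos false true false true true false, hpos false true true false false false, hpos false true true false true false, hpos false true true true false false, hpos false true true true true false, hpos true false false false false false, hpos true false false false true false, hpos true false false true false false, hpos true false false true true false, hpos true false true false false false, hpos true false true false true false, hpos true false true true false false, hpos true false true true true false, hpos true true false false false false, hpos true true false false true false, hpos true true false true false false, hpos true true false true true false, hpos true true true false false false, hpos true true true false true false, hpos true true true true false false, hpos true true true true true false]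
  have hz : ∀ a b e x y z, xor a b ≠ (x && y) → p a b e x y z = 0 := by
    intro a b e x y z h
    have h1 := hnsE a b x y z false
    simp only [Fintype.sum_bool] at h1
    have h2 := hz0 a b false x y h
    have h3 := hz0 a b true x y h
    have h4 := hpos a b false x y z
    have h5 := hpos a b true x y z
    cases e <;> linarith
  have hg : ∀ a b e x y z, xor a b = (x && y) →
      p a b e x y z = p false false e false false z := by
    intro a b e x y z h
    have c1F := hnsB false e false false true z
    have c1T := hnsB true e false false true z
    have c2F := hnsB false e true false true z
    have c2T := hnsB true e true false true z
    have c3F := hnsA false e false true false z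
    have c3T := hnsA true e false true false z
    have c4F := hnsA false e false true true z
    have c4T := hnsA true e false true true z
    simp only [Fintype.sum_bool] at c1F c1T c2F c2T c3F c3T c4F c4T
    have z1 := hz false true e false false z (by decide)
    have z2 := hz false true e false true z (by decide)
    have z3 := hz false true e true false z (by decide)
    have z4 := hz true false e false false z (by decide)
    have z5 := hz true false e false true z (by decide)
    have z6 := hz true false e true false z (by decide)
    have z7 := hz false false e true true z (by decide)
    have z8 := hz true true e true true z (by decide)
    cases a <;> cases b <;> cases x <;> cases y <;>
      first
      | exact absurd h (by decide)
      | linarith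
  have hhalf : ∀ z, p false false false false false z + p false false true false false z = 1/2 := by
    intro z
    have hn := hnorm false false z
    simp only [Fintype.sum_bool] at hn
    have g1 := hg true true false false false z (by decide)
    have g2 := hg true true true false false z (by decide)
    have z1 := hz true false false false false z (by decide)
    have z2 := hz true false true false false z (by decide)
    have z3 := hz false true false false false z (by decide)
    have z4 := hz false true true false false z (by decide)
    linarith
  constructor
  · intro a b e x y z
    simp only [Fintype.sum_bool]
    by_cases hs : xor a b = (x && y)
    · have gab := hg a b e x y z hs
      have gabF := hg a b false x y z hs
      have gabT := hg a b true x y z hs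
      cases hxy : (x && y)
      · have gTT := hg true true e x y z (by simp [hxy])
        have gFF := hg false false e x y z (by simp [hxy])
        have zTF := hz true false e x y z (by simp [hxy])
        have zFT := hz false true e x y z (by simp [hxy])
        rw [gab, gabF, gabT, gTT, gFF, zTF, zFT]
        linear_combination (-2 * p false false e false false z) * hhalf z
      · have gTF := hg true false e x y z (by simp [hxy])
        have gFT := hg false true e x y z (by simp [hxy])
        have zTT := hz true true e x y z (by simp [hxy])
        have zFF := hz false false e x y z (by simp [hxy])
        rw [gab, gabF, gabT, gTF, gFT, zTT, zFF]
        linear_combination (-2 * p false false e false false z) * hhalf z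
    · rw [hz a b e x y z hs, hz a b false x y z hs, hz a b true x y z hs]
      ring
  · have r1 : ∀ e z, p true true e false false z = p false false e false false z :=
      fun e z => hg true true e false false z (by decide)
    have r2 : ∀ e z, p true true e false true z = p false false e false false z :=
      fun e z => hg true true e false true z (by decide)
    have r3 : ∀ e z, p false false e false true z = p false false e false false z :=
      fun e z => hg false false e false true z (by decide)
    have r4 : ∀ e y z, p true false e false y z = 0 :=
      fun e y z => hz true false e false y z (by simp)
    have r5 : ∀ e y z, p false true e false y z = 0 :=
      fun e y z => hz false true e false y z (by simp)
    simp only [chsh, Fintype.sum_bool]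
    norm_num [r1, r2, r3, r4, r5]
    linarith [hhalf false, hhalf true]
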